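/- Let q be a prime power with q > a + 1 for a positive integer a. The code C obtained by evaluating all polynomials in F_q[x,y] spanned by monomials x^i y^j with i ≥ 0, j ≥ 0, i + j ≤ a at all points of (F_q^×)² has length n = (q-1)², dimension k = (a+1)(a+2)/2, and minimum distance d = n - a(q-1). -/

import Mathlib

open MvPolynomial Finset

section Helpers
variable {F : Type} [Field F] [Fintype F] [DecidableEq F]

/-- zeros of a one-variable polynomial among units are bounded by natDegree -/
lemma units_roots_card_le (g : Polynomial F) (hg : g ≠ 0) :
    #{x : Fˣ | g.eval (x : F) = 0} ≤ g.natDegree := by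
  classical
  calc #{x : Fˣ | g.eval (x : F) = 0}
      = (({x : Fˣ | g.eval (x : F) = 0} : Finset Fˣ).image (Units.val)).card :=
        (Finset.card_image_of_injective _ Units.val_injective).symm
    _ ≤ g.roots.toFinset.card := by
        apply Finset.card_le_card
        intro x hx
        simp only [Finset.mem_image, Finset.mem_filter, Finset.mem_univ, true_and] at hx
        obtain ⟨u, hu, rfl⟩ := hx
        simp [Multiset.mem_toFinset, Polynomial.mem_roots hg, Polynomial.IsRoot, hu]
    _ ≤ Multiset.card g.roots := g.roots.toFinset_card_le
    _ ≤ g.natDegree := g.card_roots'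

lemma mv_aeval_eq_eval {n : ℕ} (v : Fin n → F) (f : MvPolynomial (Fin n) F) :
    aeval v f = eval v f := by
  rw [aeval_def, Algebra.algebraMap_self]; rfl


/-- one-variable mv polynomial: zeros among units bounded by total degree -/
lemma mv_one_var_card_le (g : MvPolynomial (Fin 1) F) (hg : g ≠ 0) :
    #{x : Fˣ | eval ![(x : F)] g = 0} ≤ g.totalDegree := by
  classical
  set L : Polynomial F := aeval (fun _ : Fin 1 => (Polynomial.X : Polynomial F)) g with hL
  have hcomp : ∀ x : F, Polynomial.eval x L = eval ![x] g := by
    intro x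
    have h1 : (Polynomial.aeval x).comp (aeval fun _ : Fin 1 => (Polynomial.X : Polynomial F))
        = aeval ![x] := by
      apply algHom_ext
      intro i
      fin_cases i <;> simp
    have := congrArg (fun φ => φ g) h1
    simpa [mv_aeval_eq_eval, Polynomial.coe_aeval_eq_eval] using this
  have hLne : L ≠ 0 := by
    intro h0
    apply hg
    have h1 : (Polynomial.aeval (X 0 : MvPolynomial (Fin 1) F)).comp
        (aeval fun _ : Fin 1 => (Polynomial.X : Polynomial F)) = AlgHom.id F _ := by
      rw [← aeval_X_left]
      apply algHom_ext
      intro i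
      fin_cases i <;> simp
    have := congrArg (fun φ => φ g) h1
    simp only [AlgHom.coe_comp, Function.comp_apply, AlgHom.coe_id, id_eq] at this
    rw [← hL, h0, map_zero] at this
    exact this.symm
  have hdeg : L.natDegree ≤ g.totalDegree := by
    rw [hL, aeval_def, eval₂_eq]
    apply Polynomial.natDegree_sum_le_of_forall_le
    intro d hd
    refine le_trans (Polynomial.natDegree_mul_le) ?_
    rw [Finset.prod_pow_eq_pow_sum]
    have h3 : (algebraMap F (Polynomial F)) (coeff d g) = Polynomial.C (coeff d g) := rfl
    rw [h3]
    simp only [Polynomial.natDegree_C, Polynomial.natDegree_pow, Polynomial.natDegree_X, mul_one,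
      zero_add]
    exact le_totalDegree hd
  calc #{x : Fˣ | eval ![(x : F)] g = 0} = #{x : Fˣ | L.eval (x : F) = 0} := by
        congr 1
        exact Finset.filter_congr fun x _ => by rw [hcomp]
    _ ≤ L.natDegree := units_roots_card_le L hLne
    _ ≤ g.totalDegree := hdeg

/-- Key: a nonzero polynomial of total degree ≤ a has at most a(q-1) zeros on the torus. -/
lemma torus_zeros_card_le {a : ℕ} (f : MvPolynomial (Fin 2) F) (hf : f ≠ 0)
    (hdeg : f.totalDegree ≤ a) (hq : a + 1 < Fintype.card F) :
    #{t : Fˣ × Fˣ | eval ![(t.1 : F), (t.2 : F)] f = 0} ≤ a * (Fintype.card F - 1) := by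
  classical
  set p : Polynomial (MvPolynomial (Fin 1) F) := finSuccEquiv F 1 f with hp
  have hpne : p ≠ 0 := by
    simp [hp, AddEquivClass.map_ne_zero_iff, hf]
  set d : ℕ := p.natDegree with hd
  have hlcne : p.coeff d ≠ 0 := Polynomial.leadingCoeff_ne_zero.mpr hpne
  have hlcdeg : (p.coeff d).totalDegree + d ≤ a :=
    le_trans (totalDegree_coeff_finSuccEquiv_add_le f d hlcne) hdeg
  have hda : d ≤ a := le_trans (Nat.le_add_left _ _) hlcdeg
  set B : Finset Fˣ := {u : Fˣ | eval ![(u : F)] (p.coeff d) = 0} with hB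
  have hBcard : B.card ≤ a - d :=
    le_trans (mv_one_var_card_le _ hlcne) (by omega)
  -- eval as polynomial evaluation
  have heval : ∀ t : Fˣ × Fˣ, eval ![(t.1 : F), (t.2 : F)] f
      = Polynomial.eval (t.1 : F) (p.map (eval ![(t.2 : F)])) := by
    intro t
    have : (![(t.1 : F), (t.2 : F)] : Fin 2 → F) = Fin.cons (t.1 : F) ![(t.2 : F)] := rfl
    rw [this, eval_eq_eval_mv_eval']
  -- column bound for good u
  have hcol : ∀ u : Fˣ, u ∉ B → #{y : Fˣ | eval ![(y : F), (u : F)] f = 0} ≤ d := by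
    intro u hu
    have hne : (p.map (eval ![(u : F)])) ≠ 0 := by
      intro h0
      apply hu
      rw [hB]
      simp only [Finset.mem_filter, Finset.mem_univ, true_and]
      have := congrArg (fun q => Polynomial.coeff q d) h0
      simpa [Polynomial.coeff_map] using this
    calc #{y : Fˣ | eval ![(y : F), (u : F)] f = 0}
        = #{y : Fˣ | (p.map (eval ![(u : F)])).eval (y : F) = 0} := by
          congr 1
          exact Finset.filter_congr fun y _ => by rw [heval (y, u)]
      _ ≤ (p.map (eval ![(u : F)])).natDegree := units_roots_card_le _ hne
      _ ≤ d := Polynomial.natDegree_map_le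
  -- split the count by columns
  have hsplit : #{t : Fˣ × Fˣ | eval ![(t.1 : F), (t.2 : F)] f = 0}
      = ∑ u : Fˣ, #{y : Fˣ | eval ![(y : F), (u : F)] f = 0} := by
    simp only [Finset.card_filter]
    rw [← Finset.univ_product_univ, Finset.sum_product_right]
  have hcardU : (Finset.univ : Finset Fˣ).card = Fintype.card F - 1 := by
    rw [Finset.card_univ, Fintype.card_units]
  rw [hsplit]
  calc ∑ u : Fˣ, #{y : Fˣ | eval ![(y : F), (u : F)] f = 0}
      ≤ ∑ u : Fˣ, (if u ∈ B then Fintype.card F - 1 else d) := by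
        apply Finset.sum_le_sum
        intro u _
        by_cases hu : u ∈ B
        · simp only [hu, if_true]
          exact le_trans (Finset.card_filter_le _ _) (le_of_eq hcardU)
        · simp only [hu, if_false]
          exact hcol u hu
    _ = B.card * (Fintype.card F - 1) + Bᶜ.card * d := by
        rw [Finset.sum_ite, Finset.sum_const, Finset.sum_const]
        simp [Finset.filter_mem_eq_inter, Finset.filter_not, Finset.compl_eq_univ_sdiff,
          mul_comm]
    _ ≤ (a - d) * (Fintype.card F - 1) + (Fintype.card F - 1) * d := by
        gcongr
        rw [← hcardU]; exact Finset.card_le_univ _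
    _ = a * (Fintype.card F - 1) := by
        rw [mul_comm (Fintype.card F - 1) d, ← add_mul, Nat.sub_add_cancel hda]


lemma card_triangle (a : ℕ) :
    ({p ∈ range (a+1) ×ˢ range (a+1) | p.1 + p.2 ≤ a} : Finset (ℕ×ℕ)).card
      = (a+1)*(a+2)/2 := by
  classical
  have h1 : ({p ∈ range (a+1) ×ˢ range (a+1) | p.1 + p.2 ≤ a} : Finset (ℕ×ℕ))
      = (range (a+1)).biUnion (fun s => Finset.HasAntidiagonal.antidiagonal s) := by
    ext p
    simp only [Finset.mem_filter, Finset.mem_product, Finset.mem_range, Finset.mem_biUnion,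
      Finset.HasAntidiagonal.mem_antidiagonal]
    constructor
    · rintro ⟨⟨h1, h2⟩, h3⟩
      exact ⟨p.1 + p.2, by omega, rfl⟩
    · rintro ⟨s, hs, h⟩
      omega
  rw [h1, Finset.card_biUnion]
  · simp only [Finset.Nat.card_antidiagonal]
    have h2 : ∑ s ∈ range (a+1), (s+1) = ∑ s ∈ range (a+2), s := by
      rw [Finset.sum_range_succ' (fun i => i) (a+1)]
      simp
    rw [h2]
    have h3 := Finset.sum_range_id_mul_two (a+2)
    have h4 : (a+2) * (a+2-1) = (a+1)*(a+2) := by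
      rw [show a+2-1 = a+1 from rfl, Nat.mul_comm]
    omega
  · intro x _ y _ hxy
    simp only [Finset.disjoint_left, Finset.HasAntidiagonal.mem_antidiagonal]
    intro p hp hq
    exact hxy (hp ▸ hq)

end Helpers


/-- Evaluation of a polynomial in two variables at all points of the torus
`(F^×)²`, as a linear map. -/
noncomputable def evalTorus (F : Type) [Field F] :
    MvPolynomial (Fin 2) F →ₗ[F] ((Fˣ × Fˣ) → F) :=
  LinearMap.pi fun t => (aeval ![((t.1 : F)), ((t.2 : F))]).toLinearMap

/-- Hansen's toric code for the triangle with vertices (0,0), (a,0), (0,a):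
length (q-1)², dimension (a+1)(a+2)/2, minimum distance n - a(q-1). -/
theorem hansen_code_triangle (F : Type) [Field F] [Fintype F] [DecidableEq F]
    (a : ℕ) (ha : 0 < a) (hq : a + 1 < Fintype.card F) :
    Fintype.card (Fˣ × Fˣ) = (Fintype.card F - 1) ^ 2 ∧
    Module.finrank F ((Submodule.span F
        {m : MvPolynomial (Fin 2) F | ∃ i j : ℕ, i + j ≤ a ∧ m = X 0 ^ i * X 1 ^ j}).map
        (evalTorus F)) = (a + 1) * (a + 2) / 2 ∧
    (∃ c ∈ (Submodule.span F
        {m : MvPolynomial (Fin 2) F | ∃ i j : ℕ, i + j ≤ a ∧ m = X 0 ^ i * X 1 ^ j}).map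
        (evalTorus F), c ≠ 0 ∧
        hammingNorm c = (Fintype.card F - 1) ^ 2 - a * (Fintype.card F - 1)) ∧
    (∀ c ∈ (Submodule.span F
        {m : MvPolynomial (Fin 2) F | ∃ i j : ℕ, i + j ≤ a ∧ m = X 0 ^ i * X 1 ^ j}).map
        (evalTorus F), c ≠ 0 →
        (Fintype.card F - 1) ^ 2 - a * (Fintype.card F - 1) ≤ hammingNorm c) := by
  classical
  set q := Fintype.card F with hqdef
  set S := {m : MvPolynomial (Fin 2) F | ∃ i j : ℕ, i + j ≤ a ∧ m = X 0 ^ i * X 1 ^ j} with hS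
  set V := Submodule.span F S with hV
  have hcardU : Fintype.card Fˣ = q - 1 := by rw [hqdef]; exact Fintype.card_units F
  have hq2 : 2 ≤ q := by omega
  -- Part 1
  have part1 : Fintype.card (Fˣ × Fˣ) = (q - 1) ^ 2 := by
    rw [Fintype.card_prod, hcardU, sq]
  -- evalTorus pointwise
  have hET : ∀ (f : MvPolynomial (Fin 2) F) (t : Fˣ × Fˣ),
      evalTorus F f t = eval ![(t.1 : F), (t.2 : F)] f := by
    intro f t
    simp [evalTorus, mv_aeval_eq_eval]
  -- degrees in the span
  have hdegS : ∀ f ∈ V, totalDegree f ≤ a := by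
    intro f hf
    have hle : V ≤ restrictTotalDegree (Fin 2) F a := by
      rw [hV, Submodule.span_le]
      rintro m ⟨i, j, hij, rfl⟩
      rw [SetLike.mem_coe, mem_restrictTotalDegree]
      refine le_trans (totalDegree_mul _ _) (le_trans ?_ hij)
      simp [totalDegree_X_pow]
    exact (mem_restrictTotalDegree _ _ _).mp (hle hf)
  -- zero count bound for members of the span
  have hzeros : ∀ f ∈ V, f ≠ 0 →
      #{t : Fˣ × Fˣ | evalTorus F f t = 0} ≤ a * (q - 1) := by
    intro f hf hne
    have h1 : #{t : Fˣ × Fˣ | evalTorus F f t = 0}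
        = #{t : Fˣ × Fˣ | eval ![(t.1 : F), (t.2 : F)] f = 0} := by
      congr 1
    rw [h1]
    exact torus_zeros_card_le f hne (hdegS f hf) hq
  -- injectivity on the span
  have hinj : ∀ f ∈ V, evalTorus F f = 0 → f = 0 := by
    intro f hf h0
    by_contra hne
    have h1 := hzeros f hf hne
    have h2 : ({t : Fˣ × Fˣ | evalTorus F f t = 0} : Finset _) = Finset.univ := by
      apply Finset.eq_univ_of_forall
      intro t
      simp [h0]
    rw [h2, Finset.card_univ, part1] at h1
    have h3 : a * (q - 1) < (q - 1) ^ 2 := by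
      rw [sq]
      exact Nat.mul_lt_mul_of_lt_of_le (by omega) le_rfl (by omega)
    omega
  -- hammingNorm lower bound
  have hnormle : ∀ f ∈ V, evalTorus F f ≠ 0 →
      (q - 1) ^ 2 - a * (q - 1) ≤ hammingNorm (evalTorus F f) := by
    intro f hf hcne
    have hne : f ≠ 0 := fun h => hcne (h ▸ map_zero _)
    have h1 := hzeros f hf hne
    have h2 := Finset.card_filter_add_card_filter_not
      (s := (Finset.univ : Finset (Fˣ × Fˣ))) (p := fun t => evalTorus F f t = 0)
    rw [Finset.card_univ, part1] at h2
    have h3 : hammingNorm (evalTorus F f)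
        = #{t : Fˣ × Fˣ | ¬ evalTorus F f t = 0} := rfl
    omega
  refine ⟨part1, ?_, ?_, ?_⟩
  · -- dimension
    set T : Finset (ℕ × ℕ) := {p ∈ range (a+1) ×ˢ range (a+1) | p.1 + p.2 ≤ a} with hT
    set b : T → MvPolynomial (Fin 2) F := fun p => X 0 ^ (p : ℕ × ℕ).1 * X 1 ^ (p : ℕ × ℕ).2
      with hb
    have hbmon : ∀ p : T,
        b p = monomial (Finsupp.single 0 (p : ℕ × ℕ).1 + Finsupp.single 1 (p : ℕ × ℕ).2) 1 := by
      intro p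
      rw [hb]
      simp only
      rw [X_pow_eq_monomial, X_pow_eq_monomial, monomial_mul, one_mul]
    have hinj' : Function.Injective
        (fun p : T => Finsupp.single (0 : Fin 2) (p : ℕ × ℕ).1
          + Finsupp.single (1 : Fin 2) (p : ℕ × ℕ).2) := by
      intro p r h
      simp only at h
      have h0 := congrFun (congrArg (fun d : Fin 2 →₀ ℕ => (d : Fin 2 → ℕ)) h) 0
      have h1 := congrFun (congrArg (fun d : Fin 2 →₀ ℕ => (d : Fin 2 → ℕ)) h) 1
      simp only [Finsupp.coe_add, Pi.add_apply, Finsupp.single_apply] at h0 h1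
      norm_num at h0 h1
      exact Subtype.ext (Prod.ext h0 h1)
    have hbli : LinearIndependent F b := by
      have h := (basisMonomials (Fin 2) F).linearIndependent.comp _ hinj'
      have hfun : (⇑(basisMonomials (Fin 2) F) ∘ fun p : T => Finsupp.single (0 : Fin 2) (p : ℕ × ℕ).1
          + Finsupp.single (1 : Fin 2) (p : ℕ × ℕ).2) = b := by
        funext p
        rw [hbmon, coe_basisMonomials]
        rfl
      rw [hfun] at h
      exact h
    have hrange : Set.range b = S := by
      ext m
      constructor
      · rintro ⟨p, rfl⟩
        have hp := Finset.mem_filter.mp p.2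
        exact ⟨(p : ℕ × ℕ).1, (p : ℕ × ℕ).2, hp.2, rfl⟩
      · rintro ⟨i, j, hij, rfl⟩
        refine ⟨⟨(i, j), ?_⟩, rfl⟩
        rw [hT, Finset.mem_filter, Finset.mem_product, Finset.mem_range, Finset.mem_range]
        omega
    have hfinV : Module.finrank F V = (a + 1) * (a + 2) / 2 := by
      rw [hV, ← hrange, finrank_span_eq_card hbli, Fintype.card_coe, hT]
      exact card_triangle a
    -- transfer along injective restriction
    set L := (evalTorus F).comp V.subtype with hL
    have hLinj : Function.Injective L := by
      rw [hL]
      intro x y hxy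
      have : evalTorus F ((x : MvPolynomial (Fin 2) F) - y) = 0 := by
        rw [map_sub]
        simp only [LinearMap.coe_comp, Function.comp_apply, Submodule.coe_subtype] at hxy
        rw [hxy, sub_self]
      have := hinj _ (Submodule.sub_mem V x.2 y.2) this
      exact Subtype.ext (by rwa [sub_eq_zero] at this)
    have hmap : V.map (evalTorus F) = LinearMap.range L := by
      rw [hL, LinearMap.range_comp, Submodule.range_subtype]
    rw [hmap, LinearMap.finrank_range_of_inj hLinj, hfinV]
  · -- existence of minimum weight codeword
    obtain ⟨B, -, hBcard⟩ := Finset.exists_subset_card_eq (s := (Finset.univ : Finset Fˣ)) (n := a)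
      (by rw [Finset.card_univ, hcardU]; omega)
    set P : Polynomial F := ∏ u ∈ B, (Polynomial.X - Polynomial.C (u : F)) with hP
    have hPmonic : P.Monic := Polynomial.monic_prod_of_monic _ _
      fun _ _ => Polynomial.monic_X_sub_C _
    have hPdeg : P.natDegree = a := by
      rw [hP, Polynomial.natDegree_prod _ _ fun u _ => Polynomial.X_sub_C_ne_zero _]
      simp [hBcard]
    set f : MvPolynomial (Fin 2) F := Polynomial.aeval (X 0) P with hf
    have hfmem : f ∈ V := by
      rw [hf, Polynomial.aeval_eq_sum_range]
      apply Submodule.sum_mem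
      intro i hi
      apply Submodule.smul_mem
      apply Submodule.subset_span
      exact ⟨i, 0, by rw [Finset.mem_range] at hi; omega, by rw [pow_zero, mul_one]⟩
    have hval : ∀ t : Fˣ × Fˣ, evalTorus F f t = P.eval (t.1 : F) := by
      intro t
      rw [hET, ← mv_aeval_eq_eval, hf, ← Polynomial.aeval_algHom_apply]
      simp [Polynomial.coe_aeval_eq_eval]
    have hval0 : ∀ t : Fˣ × Fˣ, evalTorus F f t = 0 ↔ t.1 ∈ B := by
      intro t
      rw [hval, hP]
      rw [Polynomial.eval_prod]
      rw [Finset.prod_eq_zero_iff]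
      constructor
      · rintro ⟨u, hu, h⟩
        simp only [Polynomial.eval_sub, Polynomial.eval_X, Polynomial.eval_C] at h
        have heq : t.1 = u := Units.ext (by rwa [sub_eq_zero] at h)
        rw [heq]
        exact hu
      · intro h
        exact ⟨t.1, h, by simp⟩
    have hcne : evalTorus F f ≠ 0 := by
      obtain ⟨u, hu⟩ : ∃ u : Fˣ, u ∉ B := by
        by_contra hco
        push_neg at hco
        have hsub : (Finset.univ : Finset Fˣ) ⊆ B := fun u _ => hco u
        have hc := Finset.card_le_card hsub
        rw [Finset.card_univ, hcardU, hBcard] at hc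
        omega
      intro h0
      have h1 := hval0 (u, u)
      rw [h0] at h1
      simp only [Pi.zero_apply, true_iff] at h1
      exact hu h1
    refine ⟨evalTorus F f, ⟨f, hfmem, rfl⟩, hcne, ?_⟩
    have h1 : ({t : Fˣ × Fˣ | ¬ evalTorus F f t = 0} : Finset _) = Bᶜ ×ˢ Finset.univ := by
      ext t
      simp only [Finset.mem_filter, Finset.mem_univ, true_and, Finset.mem_product,
        Finset.mem_compl, and_true]
      rw [hval0]
    have h2 : hammingNorm (evalTorus F f) = (#Bᶜ) * (q - 1) := by
      rw [show hammingNorm (evalTorus F f)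
          = #{t : Fˣ × Fˣ | ¬ evalTorus F f t = 0} from rfl,
        h1, Finset.card_product, Finset.card_univ, hcardU]
    rw [h2, Finset.card_compl, hcardU, hBcard, Nat.sub_mul, sq]
  · -- minimum distance
    rintro c ⟨f, hf, rfl⟩ hcne
    exact hnormle f hf hcne
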